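/- Let q be an element of a field and let u : ℕ → V (V a vector space over the field) satisfy u^{(K)} and u^{(K−1)} coupled by u^{(K)}_{t+1} − q·u^{(K)}_t = u^{(K−1)}_t for all t, for K ≥ 2, with base case u^{(1)}_{t+1} = Σ_{ℓ=1}^{t} q^{t−ℓ}·w_ℓ. Then for every K ≥ 1 and t: Σ_{ℓ=1}^{K} (−q)^{ℓ−1}·binom(K−1, ℓ−1)·u^{(K)}_{t−ℓ+K+1} = Σ_{ℓ=1}^{t} q^{t−ℓ}·w_ℓ. -/

import Mathlib

private lemma cof_aux {F : Type*} [Field F] {V : Type*} [AddCommGroup V]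
    [Module F V] (q : F) (w : ℕ → V) (u : ℕ → ℕ → V)
    (hbase : ∀ t : ℕ, u 1 (t + 1) = ∑ ℓ ∈ Finset.Icc 1 t, q ^ (t - ℓ) • w ℓ)
    (hrec : ∀ K : ℕ, 2 ≤ K → ∀ t : ℕ, u K (t + 1) - q • u K t = u (K - 1) t) :
    ∀ K t : ℕ,
      ∑ j ∈ Finset.range (K + 1),
          ((-q) ^ j * (Nat.choose K j : F)) • u (K + 1) (t + K + 1 - j) =
        ∑ ℓ ∈ Finset.Icc 1 t, q ^ (t - ℓ) • w ℓ := by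
  intro K
  induction K with
  | zero => intro t; simpa using hbase t
  | succ K ih =>
    intro t
    have split : ∑ j ∈ Finset.range (K + 2),
        ((-q) ^ j * (Nat.choose (K + 1) j : F)) • u (K + 2) (t + (K + 1) + 1 - j)
        = (∑ j ∈ Finset.range (K + 2),
            ((-q) ^ j * (Nat.choose K j : F)) • u (K + 2) (t + K + 2 - j))
          + ∑ j ∈ Finset.range (K + 2),
            (if j = 0 then (0 : V) else
              ((-q) ^ j * (Nat.choose K (j - 1) : F)) • u (K + 2) (t + K + 2 - j)) := by
      rw [← Finset.sum_add_distrib]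
      refine Finset.sum_congr rfl fun j _ => ?_
      cases j with
      | zero =>
        have h0 : t + (K + 1) + 1 = t + K + 2 := by omega
        simp [h0]
      | succ j' =>
        have hc : (Nat.choose (K + 1) (j' + 1) : F)
            = (Nat.choose K (j' + 1) : F) + (Nat.choose K j' : F) := by
          rw [Nat.choose_succ_succ]; push_cast; ring
        have hidx : t + (K + 1) + 1 - (j' + 1) = t + K + 2 - (j' + 1) := by omega
        simp only [Nat.succ_ne_zero, if_false, Nat.succ_sub_one, hidx, hc]
        rw [mul_add, add_smul]
    rw [split]
    have h1 : ∑ j ∈ Finset.range (K + 2),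
        ((-q) ^ j * (Nat.choose K j : F)) • u (K + 2) (t + K + 2 - j)
        = ∑ j ∈ Finset.range (K + 1),
            ((-q) ^ j * (Nat.choose K j : F)) • u (K + 2) (t + K + 2 - j) := by
      rw [Finset.sum_range_succ, Nat.choose_succ_self]
      simp
    have h2 : ∑ j ∈ Finset.range (K + 2),
        (if j = 0 then (0 : V) else
          ((-q) ^ j * (Nat.choose K (j - 1) : F)) • u (K + 2) (t + K + 2 - j))
        = ∑ j ∈ Finset.range (K + 1),
            ((-q) ^ (j + 1) * (Nat.choose K j : F)) • u (K + 2) (t + K + 1 - j) := by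
      rw [Finset.sum_range_succ']
      simp only [Nat.succ_ne_zero, if_false, Nat.succ_sub_one, if_true]
      have : ∀ j, t + K + 2 - (j + 1) = t + K + 1 - j := by omega
      simp [this]
    rw [h1, h2, ← Finset.sum_add_distrib]
    rw [← ih t]
    refine Finset.sum_congr rfl fun j hj => ?_
    have hj' : j ≤ K := by simpa [Nat.lt_succ_iff] using hj
    have hs : t + K + 2 - j = (t + K + 1 - j) + 1 := by omega
    have hr := hrec (K + 2) (by omega) (t + K + 1 - j)
    have hK2 : K + 2 - 1 = K + 1 := by omega
    rw [hK2] at hr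
    rw [hs, ← hr, smul_sub]
    have : ((-q) ^ (j + 1) * (Nat.choose K j : F))
        = -(q * ((-q) ^ j * (Nat.choose K j : F))) := by ring
    rw [this, neg_smul, mul_smul, mul_smul]
    module

theorem cof_sliding_window_identity {F : Type*} [Field F] {V : Type*} [AddCommGroup V]
    [Module F V] (q : F) (w : ℕ → V) (u : ℕ → ℕ → V)
    (hbase : ∀ t : ℕ, u 1 (t + 1) = ∑ ℓ ∈ Finset.Icc 1 t, q ^ (t - ℓ) • w ℓ)
    (hrec : ∀ K : ℕ, 2 ≤ K → ∀ t : ℕ, u K (t + 1) - q • u K t = u (K - 1) t) :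
    ∀ K : ℕ, 1 ≤ K → ∀ t : ℕ,
      ∑ ℓ ∈ Finset.Icc 1 K,
          ((-q) ^ (ℓ - 1) * (Nat.choose (K - 1) (ℓ - 1) : F)) • u K (t + K + 1 - ℓ) =
        ∑ ℓ ∈ Finset.Icc 1 t, q ^ (t - ℓ) • w ℓ := by
  intro K hK t
  obtain ⟨K', rfl⟩ : ∃ K', K = K' + 1 := ⟨K - 1, by omega⟩
  rw [← cof_aux q w u hbase hrec K' t]
  have hIcc : Finset.Icc 1 (K' + 1) = Finset.Ico 1 (K' + 2) := by
    exact (Finset.Ico_add_one_right_eq_Icc (a := 1) (b := K' + 1)).symm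
  rw [hIcc, Finset.sum_Ico_eq_sum_range]
  have hn : K' + 2 - 1 = K' + 1 := by omega
  rw [hn]
  refine Finset.sum_congr rfl fun j _ => ?_
  have h1 : 1 + j - 1 = j := by omega
  have h2 : K' + 1 - 1 = K' := by omega
  have h3 : t + (K' + 1) + 1 - (1 + j) = t + K' + 1 - j := by omega
  rw [h1, h2, h3]
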